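/- arXiv:2605.23265 — 7 statements merged into one kernel-verified Lean document; each statement's English description precedes it below -/
import Mathlib

section
/- For any two permutations π, σ of {1,...,d}, the Kendall-tau distance is at most the Spearman footrule distance: κ(π,σ) ≤ F(π,σ), where κ(π,σ) counts the pairs {i,j} on which π and σ disagree in relative order. -/
/-- The Kendall-tau distance: the number of pairs {i,j} (with i < j) on which the
two permutations disagree in relative order. -/
def kendallTau {d : ℕ} (π σ : Equiv.Perm (Fin d)) : ℕ :=
  (Finset.univ.filter (fun p : Fin d × Fin d => p.1 < p.2 ∧
    ((π p.1 < π p.2 ∧ σ p.2 < σ p.1) ∨ (π p.2 < π p.1 ∧ σ p.1 < σ p.2)))).card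

private def kg {d : ℕ} (π σ : Equiv.Perm (Fin d)) (i j : Fin d) : Fin d × Fin d :=
  if π j ≤ σ i then (π j, i) else (σ i, j)

private def kf {d : ℕ} (π σ : Equiv.Perm (Fin d)) (p : Fin d × Fin d) : Fin d × Fin d :=
  if π p.1 < π p.2 then kg π σ p.1 p.2 else kg π σ p.2 p.1

private lemma kg_mem {d : ℕ} (π σ : Equiv.Perm (Fin d)) {i j : Fin d}
    (h1 : π i < π j) (h2 : σ j < σ i) :
    (π (kg π σ i j).2 < (kg π σ i j).1 ∧ (kg π σ i j).1 ≤ σ (kg π σ i j).2) ∨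
    (σ (kg π σ i j).2 < (kg π σ i j).1 ∧ (kg π σ i j).1 ≤ π (kg π σ i j).2) := by
  unfold kg
  split_ifs with h
  · left; exact ⟨h1, h⟩
  · right; exact ⟨h2, le_of_lt (lt_of_not_ge h)⟩

private lemma kg_inj {d : ℕ} (π σ : Equiv.Perm (Fin d)) {i j i' j' : Fin d}
    (h1 : π i < π j) (h2 : σ j < σ i) (h1' : π i' < π j') (h2' : σ j' < σ i')
    (he : kg π σ i j = kg π σ i' j') : i = i' ∧ j = j' := by
  unfold kg at he
  split_ifs at he with ha hb hb
  · simp only [Prod.mk.injEq] at he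
    obtain ⟨e1, e2⟩ := he
    exact ⟨e2, π.injective e1⟩
  · -- he : (π j, i) = (σ i', j'), ha : π j ≤ σ i, hb : ¬ π j' ≤ σ i'
    simp only [Prod.mk.injEq] at he
    obtain ⟨e1, e2⟩ := he
    exfalso
    subst e2
    exact lt_irrefl _ (lt_of_lt_of_le h2' (e1 ▸ ha))
  · -- he : (σ i, j) = (π j', i'), ha : ¬ π j ≤ σ i, hb : π j' ≤ σ i'
    simp only [Prod.mk.injEq] at he
    obtain ⟨e1, e2⟩ := he
    exfalso
    subst e2
    exact lt_irrefl _ (lt_trans h1' (e1 ▸ lt_of_not_ge ha))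
  · simp only [Prod.mk.injEq] at he
    obtain ⟨e1, e2⟩ := he
    exact ⟨σ.injective e1, e2⟩

theorem stmt_4 (d : ℕ) (π σ : Equiv.Perm (Fin d)) :
    (kendallTau π σ : ℤ) ≤ ∑ i : Fin d, |(π i : ℤ) - (σ i : ℤ)| := by
  set T : Finset (Fin d × Fin d) := Finset.univ.filter
    (fun q : Fin d × Fin d => (π q.2 < q.1 ∧ q.1 ≤ σ q.2) ∨ (σ q.2 < q.1 ∧ q.1 ≤ π q.2))
    with hT
  have h1 : kendallTau π σ ≤ T.card := by
    apply Finset.card_le_card_of_injOn (kf π σ)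
    · intro p hp
      simp only [Finset.mem_coe, Finset.mem_filter, Finset.mem_univ, true_and] at hp
      obtain ⟨hlt, hd⟩ := hp
      rw [hT]
      simp only [Finset.mem_coe, Finset.mem_filter, Finset.mem_univ, true_and]
      unfold kf
      split_ifs with h
      · rcases hd with ⟨a, b⟩ | ⟨a, b⟩
        · exact kg_mem π σ a b
        · exact absurd h (not_lt_of_gt a)
      · rcases hd with ⟨a, b⟩ | ⟨a, b⟩
        · exact absurd a h
        · exact kg_mem π σ a b
    · intro p hp q hq he
      simp only [Finset.mem_coe, Finset.mem_filter, Finset.mem_univ, true_and] at hp hq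
      obtain ⟨hp12, hpd⟩ := hp
      obtain ⟨hq12, hqd⟩ := hq
      unfold kf at he
      split_ifs at he with h h' h'
      · rcases hpd with ⟨a, b⟩ | ⟨a, b⟩
        · rcases hqd with ⟨a', b'⟩ | ⟨a', b'⟩
          · obtain ⟨e1, e2⟩ := kg_inj π σ a b a' b' he
            exact Prod.ext e1 e2
          · exact absurd h' (not_lt_of_gt a')
        · exact absurd h (not_lt_of_gt a)
      · rcases hpd with ⟨a, b⟩ | ⟨a, b⟩
        · rcases hqd with ⟨a', b'⟩ | ⟨a', b'⟩
          · exact absurd a' h'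
          · obtain ⟨e1, e2⟩ := kg_inj π σ a b a' b' he
            -- e1 : p.1 = q.2, e2 : p.2 = q.1
            exact absurd (e1 ▸ e2 ▸ hp12) (not_lt_of_gt hq12)
        · exact absurd h (not_lt_of_gt a)
      · rcases hpd with ⟨a, b⟩ | ⟨a, b⟩
        · exact absurd a h
        · rcases hqd with ⟨a', b'⟩ | ⟨a', b'⟩
          · obtain ⟨e1, e2⟩ := kg_inj π σ a b a' b' he
            -- p normalized (p.2,p.1): e1 : p.2 = q.1, e2 : p.1 = q.2
            exact absurd (e1 ▸ e2 ▸ hp12) (not_lt_of_gt hq12)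
          · exact absurd h' (not_lt_of_gt a')
      · rcases hpd with ⟨a, b⟩ | ⟨a, b⟩
        · exact absurd a h
        · rcases hqd with ⟨a', b'⟩ | ⟨a', b'⟩
          · exact absurd a' h'
          · obtain ⟨e1, e2⟩ := kg_inj π σ a b a' b' he
            exact Prod.ext e2 e1
  have hcard : T.card = ∑ x : Fin d, (Finset.univ.filter
      (fun k : Fin d => (π x < k ∧ k ≤ σ x) ∨ (σ x < k ∧ k ≤ π x))).card := by
    rw [hT, Finset.card_filter, Fintype.sum_prod_type, Finset.sum_comm]
    refine Finset.sum_congr rfl fun x _ => ?_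
    rw [Finset.card_filter]
  have hle : ∀ x : Fin d, ((Finset.univ.filter
      (fun k : Fin d => (π x < k ∧ k ≤ σ x) ∨ (σ x < k ∧ k ≤ π x))).card : ℤ)
      ≤ |(π x : ℤ) - (σ x : ℤ)| := by
    intro x
    have heq : Finset.univ.filter
        (fun k : Fin d => (π x < k ∧ k ≤ σ x) ∨ (σ x < k ∧ k ≤ π x))
        = Finset.Ioc (π x) (σ x) ∪ Finset.Ioc (σ x) (π x) := by
      ext k
      simp [Finset.mem_Ioc]
    rw [heq]
    have := Finset.card_union_le (Finset.Ioc (π x) (σ x)) (Finset.Ioc (σ x) (π x))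
    have c1 : (Finset.Ioc (π x) (σ x)).card = (σ x : ℕ) - (π x : ℕ) := by
      rw [Fin.card_Ioc]
    have c2 : (Finset.Ioc (σ x) (π x)).card = (π x : ℕ) - (σ x : ℕ) := by
      rw [Fin.card_Ioc]
    have : ((Finset.Ioc (π x) (σ x) ∪ Finset.Ioc (σ x) (π x)).card : ℤ)
        ≤ ((σ x : ℕ) - (π x : ℕ) + ((π x : ℕ) - (σ x : ℕ)) : ℕ) := by
      exact_mod_cast le_trans this (by rw [c1, c2])
    refine le_trans this ?_
    have hπ : ((π x : Fin d) : ℤ) = ((π x : ℕ) : ℤ) := by norm_cast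
    have hσ : ((σ x : Fin d) : ℤ) = ((σ x : ℕ) : ℤ) := by norm_cast
    rw [hπ, hσ, Int.abs_eq_natAbs]
    omega
  calc ((kendallTau π σ : ℕ) : ℤ) ≤ (T.card : ℤ) := by exact_mod_cast h1
    _ = ∑ x : Fin d, ((Finset.univ.filter
      (fun k : Fin d => (π x < k ∧ k ≤ σ x) ∨ (σ x < k ∧ k ≤ π x))).card : ℤ) := by
        rw [hcard]; push_cast; ring
    _ ≤ ∑ i : Fin d, |(π i : ℤ) - (σ i : ℤ)| := Finset.sum_le_sum (fun x _ => hle x)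
end

section
/- For any two permutations π, σ of {1,...,d}, the Spearman footrule distance is at most twice the Kendall-tau distance: F(π,σ) ≤ 2·κ(π,σ). -/
open Finset

private lemma rank_eq {d : ℕ} (τ : Equiv.Perm (Fin d)) (i : Fin d) :
    (univ.filter fun j => τ j < τ i).card = (τ i : ℕ) := by
  have h : (univ.filter fun j => τ j < τ i).card = (univ.filter fun v : Fin d => v < τ i).card := by
    apply Finset.card_bij (fun j _ => τ j)
    · intro a ha; simp at ha ⊢; exact ha
    · intro a _ b _ h; exact τ.injective h
    · intro b hb; refine ⟨τ.symm b, ?_, by simp⟩; simp at hb ⊢; simpa using hb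
  rw [h]
  have : (univ.filter fun v : Fin d => v < τ i) = Finset.Iio (τ i) := by ext v; simp
  rw [this, Fin.card_Iio]

private lemma pointwise {d : ℕ} (π σ : Equiv.Perm (Fin d)) (i : Fin d) :
    |(π i : ℤ) - (σ i : ℤ)| ≤
      ((univ.filter fun j => (π i < π j ∧ σ j < σ i) ∨ (π j < π i ∧ σ i < σ j)).card : ℤ) := by
  set S := univ.filter fun j => π j < π i with hS
  set T := univ.filter fun j => σ j < σ i with hT
  have hScard : (S.card : ℤ) = (π i : ℕ) := by exact_mod_cast rank_eq π i
  have hTcard : (T.card : ℤ) = (σ i : ℕ) := by exact_mod_cast rank_eq σ i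
  have hSsplit : (S.card : ℤ) = (S ∩ T).card + (S \ T).card := by
    exact_mod_cast (Finset.card_inter_add_card_sdiff S T).symm
  have hTsplit : (T.card : ℤ) = (S ∩ T).card + (T \ S).card := by
    rw [Finset.inter_comm]
    exact_mod_cast (Finset.card_inter_add_card_sdiff T S).symm
  have hST : S \ T = univ.filter fun j => π j < π i ∧ σ i < σ j := by
    ext j
    simp only [hS, hT, Finset.mem_sdiff, Finset.mem_filter, Finset.mem_univ, true_and]
    constructor
    · rintro ⟨h1, h2⟩
      refine ⟨h1, lt_of_le_of_ne (not_lt.mp h2) ?_⟩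
      intro h; have e := σ.injective h; rw [e] at h1; exact lt_irrefl _ h1
    · rintro ⟨h1, h2⟩; exact ⟨h1, not_lt.mpr h2.le⟩
  have hTS : T \ S = univ.filter fun j => σ j < σ i ∧ π i < π j := by
    ext j
    simp only [hS, hT, Finset.mem_sdiff, Finset.mem_filter, Finset.mem_univ, true_and]
    constructor
    · rintro ⟨h1, h2⟩
      refine ⟨h1, lt_of_le_of_ne (not_lt.mp h2) ?_⟩
      intro h; have e := π.injective h; rw [e] at h1; exact lt_irrefl _ h1
    · rintro ⟨h1, h2⟩; exact ⟨h1, not_lt.mpr h2.le⟩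
  have hsplit : (univ.filter fun j => (π i < π j ∧ σ j < σ i) ∨ (π j < π i ∧ σ i < σ j))
      = (T \ S) ∪ (S \ T) := by
    rw [hST, hTS, ← Finset.filter_or]
    apply Finset.filter_congr
    intro j _
    constructor
    · rintro (⟨a, b⟩ | ⟨a, b⟩); exacts [Or.inl ⟨b, a⟩, Or.inr ⟨a, b⟩]
    · rintro (⟨a, b⟩ | ⟨a, b⟩); exacts [Or.inl ⟨b, a⟩, Or.inr ⟨a, b⟩]
  have hdisj : Disjoint (T \ S) (S \ T) := by
    simp only [Finset.disjoint_left, Finset.mem_sdiff]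
    rintro x ⟨_, hx2⟩ ⟨hx3, _⟩
    exact hx2 hx3
  have hcard : ((univ.filter fun j => (π i < π j ∧ σ j < σ i) ∨ (π j < π i ∧ σ i < σ j)).card : ℤ)
      = (T \ S).card + (S \ T).card := by
    rw [hsplit]; exact_mod_cast Finset.card_union_of_disjoint hdisj
  have : (π i : ℤ) - (σ i : ℤ) = (S \ T).card - (T \ S).card := by
    rw [← hScard, ← hTcard, hSsplit, hTsplit]; ring
  rw [this, hcard]
  have a := (S \ T).card
  have h0 : (0:ℤ) ≤ ((S \ T).card : ℤ) := by positivity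
  have h0' : (0:ℤ) ≤ ((T \ S).card : ℤ) := by positivity
  rw [abs_sub_le_iff]
  constructor <;> linarith

theorem stmt_5 (d : ℕ) (π σ : Equiv.Perm (Fin d)) :
    ∑ i : Fin d, |(π i : ℤ) - (σ i : ℤ)| ≤ 2 * (kendallTau π σ : ℤ) := by
  have step1 : ∑ i : Fin d, |(π i : ℤ) - (σ i : ℤ)| ≤
      ∑ i : Fin d, ((univ.filter fun j => (π i < π j ∧ σ j < σ i) ∨ (π j < π i ∧ σ i < σ j)).card : ℤ) :=
    Finset.sum_le_sum fun i _ => pointwise π σ i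
  refine step1.trans ?_
  have step2 : ∑ i : Fin d, ((univ.filter fun j => (π i < π j ∧ σ j < σ i) ∨ (π j < π i ∧ σ i < σ j)).card : ℕ)
      = ((univ : Finset (Fin d × Fin d)).filter fun p =>
          (π p.1 < π p.2 ∧ σ p.2 < σ p.1) ∨ (π p.2 < π p.1 ∧ σ p.1 < σ p.2)).card := by
    simp only [Finset.card_filter]
    rw [← Finset.univ_product_univ, Finset.sum_product]
  have step3 : ((univ : Finset (Fin d × Fin d)).filter fun p =>
          (π p.1 < π p.2 ∧ σ p.2 < σ p.1) ∨ (π p.2 < π p.1 ∧ σ p.1 < σ p.2)).card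
      = 2 * kendallTau π σ := by
    have hsplit : ((univ : Finset (Fin d × Fin d)).filter fun p =>
          (π p.1 < π p.2 ∧ σ p.2 < σ p.1) ∨ (π p.2 < π p.1 ∧ σ p.1 < σ p.2))
        = ((univ : Finset (Fin d × Fin d)).filter fun p => p.1 < p.2 ∧
            ((π p.1 < π p.2 ∧ σ p.2 < σ p.1) ∨ (π p.2 < π p.1 ∧ σ p.1 < σ p.2)))
          ∪ ((univ : Finset (Fin d × Fin d)).filter fun p => p.2 < p.1 ∧
            ((π p.1 < π p.2 ∧ σ p.2 < σ p.1) ∨ (π p.2 < π p.1 ∧ σ p.1 < σ p.2))) := by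
      rw [← Finset.filter_or]
      apply Finset.filter_congr
      intro p _
      constructor
      · intro h
        have hne : p.1 ≠ p.2 := by
          intro he
          rcases h with ⟨a, _⟩ | ⟨a, _⟩ <;> rw [he] at a <;> exact lt_irrefl _ a
        rcases lt_or_gt_of_ne hne with hlt | hgt
        · exact Or.inl ⟨hlt, h⟩
        · exact Or.inr ⟨hgt, h⟩
      · rintro (⟨_, h⟩ | ⟨_, h⟩) <;> exact h
    have hdisj : Disjoint
        ((univ : Finset (Fin d × Fin d)).filter fun p => p.1 < p.2 ∧
            ((π p.1 < π p.2 ∧ σ p.2 < σ p.1) ∨ (π p.2 < π p.1 ∧ σ p.1 < σ p.2)))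
        ((univ : Finset (Fin d × Fin d)).filter fun p => p.2 < p.1 ∧
            ((π p.1 < π p.2 ∧ σ p.2 < σ p.1) ∨ (π p.2 < π p.1 ∧ σ p.1 < σ p.2))) := by
      rw [Finset.disjoint_filter]
      rintro p _ ⟨h1, _⟩ ⟨h2, _⟩
      exact absurd h1 (not_lt.mpr h2.le)
    have hswap : ((univ : Finset (Fin d × Fin d)).filter fun p => p.2 < p.1 ∧
            ((π p.1 < π p.2 ∧ σ p.2 < σ p.1) ∨ (π p.2 < π p.1 ∧ σ p.1 < σ p.2))).card
        = kendallTau π σ := by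
      unfold kendallTau
      apply Finset.card_bij (fun p _ => (p.2, p.1))
      · intro p hp
        simp only [Finset.mem_filter, Finset.mem_univ, true_and] at hp ⊢
        exact ⟨hp.1, hp.2.symm⟩
      · rintro ⟨a, b⟩ _ ⟨c, e⟩ _ h
        simp only [Prod.mk.injEq] at h
        simp [h.1, h.2]
      · rintro ⟨a, b⟩ hb
        simp only [Finset.mem_filter, Finset.mem_univ, true_and] at hb
        exact ⟨(b, a), by simpa using ⟨hb.1, hb.2.symm⟩, rfl⟩
    rw [hsplit, Finset.card_union_of_disjoint hdisj, hswap]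
    unfold kendallTau
    ring
  have keyN := step2.trans step3
  have key : ∑ i : Fin d, ((univ.filter fun j => (π i < π j ∧ σ j < σ i) ∨ (π j < π i ∧ σ i < σ j)).card : ℤ)
      = 2 * (kendallTau π σ : ℤ) := by exact_mod_cast keyN
  rw [key]
end

section
/- Let (X,ρ) be a metric space, S ⊆ X a finite multiset, and 𝒫 ⊆ X a nonempty subset. For each π ∈ S let f(π) ∈ 𝒫 be a point of 𝒫 closest to π. Then the element σ ∈ {f(π) : π ∈ S} minimizing ∑_{π'∈S} ρ(π', σ) satisfies ∑_{π'∈S} ρ(π', σ) ≤ 3 · min_{τ∈𝒫} ∑_{π'∈S} ρ(π', τ). -/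
theorem stmt_7 {X : Type*} [MetricSpace X] (S : Multiset X) (P : Set X) (hP : P.Nonempty)
    (f : X → X)
    (hf : ∀ π ∈ S, f π ∈ P ∧ ∀ τ ∈ P, dist π (f π) ≤ dist π τ)
    (σ : X) (hσ : ∃ π ∈ S, σ = f π)
    (hmin : ∀ π ∈ S, (S.map (fun π' => dist π' σ)).sum ≤ (S.map (fun π' => dist π' (f π))).sum) :
    ∀ τ ∈ P, (S.map (fun π' => dist π' σ)).sum ≤ 3 * (S.map (fun π' => dist π' τ)).sum := by
  intro τ hτ
  obtain ⟨π₀, hπ₀, _⟩ := hσ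
  set n : ℕ := Multiset.card S with hn
  have hnpos : 0 < (n : ℝ) := by
    have : 0 < n := Multiset.card_pos_iff_exists_mem.mpr ⟨π₀, hπ₀⟩
    exact_mod_cast this
  set OPT : ℝ := (S.map (fun π' => dist π' τ)).sum with hOPT
  set C : ℝ := (S.map (fun π' => dist π' σ)).sum with hC
  -- per-point bound
  have key : ∀ π ∈ S, C ≤ OPT + (n : ℝ) * (2 * dist π τ) := by
    intro π hπ
    have h1 : (S.map (fun π' => dist π' (f π))).sum ≤
        (S.map (fun π' => dist π' τ + 2 * dist π τ)).sum := by
      apply Multiset.sum_map_le_sum_map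
      intro π' _
      have hfp := (hf π hπ).2 τ hτ
      calc dist π' (f π) ≤ dist π' τ + dist τ (f π) := dist_triangle _ _ _
        _ ≤ dist π' τ + (dist τ π + dist π (f π)) := by
            linarith [dist_triangle τ π (f π)]
        _ ≤ dist π' τ + 2 * dist π τ := by
            rw [dist_comm τ π]; linarith
    have h2 : (S.map (fun π' => dist π' τ + 2 * dist π τ)).sum
        = OPT + (n : ℝ) * (2 * dist π τ) := by
      rw [Multiset.sum_map_add]
      congr 1
      rw [Multiset.map_const', Multiset.sum_replicate, nsmul_eq_mul]
    calc C ≤ (S.map (fun π' => dist π' (f π))).sum := hmin π hπ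
      _ ≤ _ := h1
      _ = _ := h2
  -- sum over π ∈ S
  have hsum : (S.map (fun _ => C)).sum ≤
      (S.map (fun π => OPT + (n : ℝ) * (2 * dist π τ))).sum :=
    Multiset.sum_map_le_sum_map _ _ key
  have hL : (S.map (fun _ => C)).sum = (n : ℝ) * C := by
    rw [Multiset.map_const', Multiset.sum_replicate, nsmul_eq_mul]
  have hR : (S.map (fun π => OPT + (n : ℝ) * (2 * dist π τ))).sum
      = (n : ℝ) * OPT + 2 * (n : ℝ) * OPT := by
    rw [Multiset.sum_map_add]
    congr 1
    · rw [Multiset.map_const', Multiset.sum_replicate, nsmul_eq_mul]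
    · rw [show (fun π => (n : ℝ) * (2 * dist π τ))
          = (fun π => (2 * (n : ℝ)) * dist π τ) from by funext π; ring]
      rw [← Multiset.sum_map_mul_left]
  have : (n : ℝ) * C ≤ (n : ℝ) * (3 * OPT) := by
    rw [← hL]; calc _ ≤ _ := hsum
      _ = (n : ℝ) * (3 * OPT) := by rw [hR]; ring
  exact le_of_mul_le_mul_left this hnpos
end

section
/- Let A be a totally unimodular integer matrix and b an integral vector. Then every vertex (basic feasible solution) of the polyhedron P = {x ∈ ℝ^n : Ax = b, x ≥ 0} has all integer coordinates. -/
open Matrix Finset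

/-- From a spanning family, extract an injective subfamily that is linearly independent
(of size equal to the dimension). -/
lemma aux_exists_rows {t m : ℕ} (v : Fin m → (Fin t → ℝ))
    (hspan : ⊤ ≤ Submodule.span ℝ (Set.range v)) :
    ∃ f : Fin t → Fin m, Function.Injective f ∧ LinearIndependent ℝ (v ∘ f) := by
  classical
  obtain ⟨s, hs_sub, hs_span, hs_li⟩ := exists_linearIndependent ℝ (Set.range v)
  have hsp : ⊤ ≤ Submodule.span ℝ (Set.range ((↑) : s → (Fin t → ℝ))) := by
    rwa [Subtype.range_coe, hs_span]
  let bb : Module.Basis s ℝ (Fin t → ℝ) := Module.Basis.mk hs_li hsp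
  haveI : Fintype s := FiniteDimensional.fintypeBasisIndex bb
  have hcard : Fintype.card s = t := by
    have h1 := Module.finrank_eq_card_basis bb
    rw [Module.finrank_fin_fun] at h1
    omega
  let e : Fin t ≃ s := (Fintype.equivFinOfCardEq hcard).symm
  have hex : ∀ k : Fin t, ∃ i, v i = (e k : Fin t → ℝ) := fun k => hs_sub (e k).2
  refine ⟨fun k => (hex k).choose, ?_, ?_⟩
  · intro k1 k2 h
    have h1 := (hex k1).choose_spec
    have h2 := (hex k2).choose_spec
    simp only at h
    rw [h, h2] at h1
    exact e.injective (Subtype.ext h1.symm)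
  · have : v ∘ (fun k => (hex k).choose) = ((↑) : s → (Fin t → ℝ)) ∘ e :=
      funext fun k => (hex k).choose_spec
    rw [this]
    exact hs_li.comp e e.injective

lemma aux_rows_span {m t : ℕ} (B : Matrix (Fin m) (Fin t) ℝ)
    (h : LinearIndependent ℝ (fun k => Bᵀ k)) :
    ⊤ ≤ Submodule.span ℝ (Set.range (fun i => B i)) := by
  have h1 : B.rank = t := by
    rw [Matrix.rank_eq_finrank_span_cols]
    exact (finrank_span_eq_card h).trans (Fintype.card_fin t)
  have h2 : Bᵀ.rank = t := by rw [Matrix.rank_transpose, h1]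
  rw [Matrix.rank_eq_finrank_span_cols] at h2
  change Module.finrank ℝ (Submodule.span ℝ (Set.range B)) = t at h2
  have := Submodule.eq_top_of_finrank_eq (S := Submodule.span ℝ (Set.range B))
    (by rw [h2, Module.finrank_fin_fun])
  exact this.ge

theorem stmt_8 {m n : ℕ} (A : Matrix (Fin m) (Fin n) ℤ)
    (hTU : ∀ (t : ℕ) (f : Fin t → Fin m) (g : Fin t → Fin n),
      Function.Injective f → Function.Injective g →
      (A.submatrix f g).det ∈ ({-1, 0, 1} : Set ℤ))
    (b : Fin m → ℤ) (x : Fin n → ℝ)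
    (hxP : (A.map (Int.cast : ℤ → ℝ)).mulVec x = (fun i => (b i : ℝ)) ∧ ∀ j, 0 ≤ x j)
    (hvert : ∀ y z : Fin n → ℝ,
      ((A.map (Int.cast : ℤ → ℝ)).mulVec y = (fun i => (b i : ℝ)) ∧ ∀ j, 0 ≤ y j) →
      ((A.map (Int.cast : ℤ → ℝ)).mulVec z = (fun i => (b i : ℝ)) ∧ ∀ j, 0 ≤ z j) →
      ∀ t : ℝ, 0 < t → t < 1 → (x = fun j => t * y j + (1 - t) * z j) → y = z) :
    ∀ j, ∃ q : ℤ, x j = (q : ℝ) := by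
  classical
  obtain ⟨hAx, hx0⟩ := hxP
  set A' : Matrix (Fin m) (Fin n) ℝ := A.map (Int.cast : ℤ → ℝ) with hA'
  set S : Finset (Fin n) := Finset.univ.filter (fun j => x j ≠ 0) with hSdef
  set t := S.card with ht
  set g : Fin t → Fin n := fun k => ((S.orderIsoOfFin rfl k : Fin n)) with hgdef
  have hg_inj : Function.Injective g := fun a b h =>
    (S.orderIsoOfFin rfl).injective (Subtype.ext h)
  have hg_mem : ∀ k, g k ∈ S := fun k => (S.orderIsoOfFin rfl k).2
  have hg_surj : ∀ j ∈ S, ∃ k, g k = j := fun j hj =>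
    ⟨(S.orderIsoOfFin rfl).symm ⟨j, hj⟩,
      congrArg Subtype.val ((S.orderIsoOfFin rfl).apply_symm_apply ⟨j, hj⟩)⟩
  have hxpos : ∀ j ∈ S, 0 < x j := by
    intro j hj
    rcases (hx0 j).lt_or_eq with h | h
    · exact h
    · exfalso; simp only [hSdef, Finset.mem_filter] at hj; exact hj.2 h.symm
  have hxzero : ∀ j, j ∉ S → x j = 0 := by
    intro j hj; by_contra h; exact hj (by simp [hSdef, h])
  have hsum : ∀ (F : Fin n → ℝ), (∀ j ∉ S, F j = 0) → ∑ j, F j = ∑ k, F (g k) := by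
    intro F hF
    rw [← Finset.sum_subset (Finset.subset_univ S) (fun j _ hj => hF j hj),
      ← Finset.sum_coe_sort S F]
    exact (Equiv.sum_comp (S.orderIsoOfFin rfl).toEquiv (fun a : S => F ↑a)).symm
  set B : Matrix (Fin m) (Fin t) ℝ := A'.submatrix id g with hBdef
  -- columns of B are linearly independent
  have hcol : LinearIndependent ℝ (fun k => Bᵀ k) := by
    refine (Matrix.mulVec_injective_iff (M := B)).mp ?_
    have hker : ∀ c : Fin t → ℝ, B *ᵥ c = 0 → c = 0 := by
      intro c hc
      set c' : Fin n → ℝ := fun j => if h : ∃ k, g k = j then c h.choose else 0 with hc'def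
      have hc'g : ∀ k, c' (g k) = c k := by
        intro k
        have hex : ∃ k', g k' = g k := ⟨k, rfl⟩
        simp only [hc'def, dif_pos hex]
        congr 1
        exact hg_inj hex.choose_spec
      have hc'0 : ∀ j, j ∉ S → c' j = 0 := by
        intro j hj
        have hne : ¬ ∃ k, g k = j := fun ⟨k, hk⟩ => hj (hk ▸ hg_mem k)
        simp [hc'def, hne]
      have hAc' : A' *ᵥ c' = 0 := by
        funext i
        have h2 := congrFun hc i
        simp only [Matrix.mulVec, dotProduct, Pi.zero_apply] at h2 ⊢
        rw [hsum (fun j => A' i j * c' j)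
          (fun j hj => by show A' i j * c' j = 0; rw [hc'0 j hj, mul_zero])]
        calc ∑ k, A' i (g k) * c' (g k) = ∑ k, B i k * c k := by
              apply Finset.sum_congr rfl
              intro k _
              rw [hc'g k]; rfl
          _ = 0 := h2
      by_cases hS0 : S.Nonempty
      · set ε := S.inf' hS0 (fun j => x j / (|c' j| + 1)) with hεdef
        have hεpos : 0 < ε := by
          rw [hεdef, Finset.lt_inf'_iff]
          intro j hj
          exact div_pos (hxpos j hj) (by positivity)
        have hbound : ∀ j, ε * |c' j| ≤ x j := by
          intro j
          by_cases hj : j ∈ S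
          · have h1 : ε ≤ x j / (|c' j| + 1) := Finset.inf'_le _ hj
            have h2 : (0:ℝ) ≤ |c' j| := abs_nonneg _
            calc ε * |c' j| ≤ (x j / (|c' j| + 1)) * |c' j| :=
                  mul_le_mul_of_nonneg_right h1 h2
              _ ≤ x j := by
                  rw [div_mul_eq_mul_div, div_le_iff₀ (by positivity)]
                  nlinarith [hx0 j]
          · rw [hc'0 j hj]; simpa using hx0 j
        set y : Fin n → ℝ := fun j => x j + ε * c' j with hydef
        set z : Fin n → ℝ := fun j => x j - ε * c' j with hzdef
        have hy0 : ∀ j, 0 ≤ y j := by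
          intro j
          have h := hbound j
          have h2 := neg_abs_le (c' j)
          simp only [hydef]
          nlinarith
        have hz0 : ∀ j, 0 ≤ z j := by
          intro j
          have h := hbound j
          have h3 := le_abs_self (c' j)
          simp only [hzdef]
          nlinarith
        have hmv : ∀ (s : ℝ), A' *ᵥ (fun j => x j + s * c' j) = fun i => (b i : ℝ) := by
          intro s
          funext i
          have h1 := congrFun hAx i
          have h2 := congrFun hAc' i
          simp only [Matrix.mulVec, dotProduct, Pi.zero_apply] at h1 h2 ⊢
          calc ∑ j, A' i j * (x j + s * c' j)
              = (∑ j, A' i j * x j) + s * ∑ j, A' i j * c' j := by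
                rw [Finset.mul_sum, ← Finset.sum_add_distrib]
                apply Finset.sum_congr rfl
                intro j _; ring
            _ = (b i : ℝ) := by rw [h1, h2]; ring
        have hyfeas : A' *ᵥ y = fun i => (b i : ℝ) := hmv ε
        have hzfeas : A' *ᵥ z = fun i => (b i : ℝ) := by
          have hzz : z = fun j => x j + (-ε) * c' j := by
            funext j; show x j - ε * c' j = x j + (-ε) * c' j; ring
          rw [hzz]; exact hmv (-ε)
        have h12 : x = fun j => (1/2 : ℝ) * y j + (1 - 1/2) * z j := by
          funext j; simp only [hydef, hzdef]; ring
        have hyz_eq := hvert y z ⟨hyfeas, hy0⟩ ⟨hzfeas, hz0⟩ (1/2)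
          (by norm_num) (by norm_num) h12
        funext k
        have heq := congrFun hyz_eq (g k)
        simp only [hydef, hzdef] at heq
        have hz : ε * c' (g k) = 0 := by linarith
        have := (mul_eq_zero.mp hz).resolve_left (ne_of_gt hεpos)
        rw [hc'g] at this
        exact this
      · funext k
        exact absurd ⟨g k, hg_mem k⟩ hS0
    intro c d h
    have := hker (c - d) (by rw [Matrix.mulVec_sub, h, sub_self])
    exact sub_eq_zero.mp this
  obtain ⟨f, hf_inj, hf_li⟩ := aux_exists_rows (fun i => B i) (aux_rows_span B hcol)
  have hunit : IsUnit (B.submatrix f id) := by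
    rw [← Matrix.linearIndependent_rows_iff_isUnit]
    exact hf_li
  set M : Matrix (Fin t) (Fin t) ℤ := A.submatrix f g with hMdef
  have hMr : B.submatrix f id = M.map (Int.cast : ℤ → ℝ) := by
    funext i j; rfl
  rw [hMr] at hunit
  have hdet_map : (M.map (Int.cast : ℤ → ℝ)).det = ((M.det : ℤ) : ℝ) := by
    rw [show M.map (Int.cast : ℤ → ℝ) = (Int.castRingHom ℝ).mapMatrix M from rfl,
      ← RingHom.map_det]
    rfl
  have hdetR : ((M.det : ℤ) : ℝ) ≠ 0 := by
    have h := (Matrix.isUnit_iff_isUnit_det _).mp hunit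
    rw [hdet_map] at h
    exact h.ne_zero
  have hdet0 : M.det ≠ 0 := fun h => hdetR (by rw [h]; simp)
  have hdet_unit : IsUnit M.det := by
    have := hTU t f g hf_inj hg_inj
    rw [Int.isUnit_iff]
    rcases this with h | h | h
    · right; exact h
    · exact absurd h hdet0
    · left; exact h
  set u : Fin t → ℤ := M⁻¹ *ᵥ (fun k => b (f k)) with hudef
  have hMu : M *ᵥ u = fun k => b (f k) := by
    rw [hudef, Matrix.mulVec_mulVec, Matrix.mul_nonsing_inv _ hdet_unit, Matrix.one_mulVec]
  have hMx : (M.map (Int.cast : ℤ → ℝ)) *ᵥ (fun k => x (g k)) = fun i => (b (f i) : ℝ) := by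
    funext i
    have h1 := congrFun hAx (f i)
    simp only [Matrix.mulVec, dotProduct] at h1 ⊢
    rw [show ∑ k, (M.map (Int.cast : ℤ → ℝ)) i k * x (g k)
        = ∑ k, A' (f i) (g k) * x (g k) from rfl,
      ← hsum (fun j => A' (f i) j * x j) (fun j hj => by show A' (f i) j * x j = 0; rw [hxzero j hj, mul_zero])]
    exact h1
  have hMuR : (M.map (Int.cast : ℤ → ℝ)) *ᵥ (fun k => (u k : ℝ)) = fun i => (b (f i) : ℝ) := by
    funext i
    have h2 := congrFun hMu i
    simp only [Matrix.mulVec, dotProduct] at h2 ⊢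
    have h3 : ((∑ k, M i k * u k : ℤ) : ℝ) = ((b (f i) : ℤ) : ℝ) := by rw [h2]
    push_cast at h3
    exact h3
  have hinj : Function.Injective ((M.map (Int.cast : ℤ → ℝ))).mulVec :=
    Matrix.mulVec_injective_iff_isUnit.mpr hunit
  have hxu : (fun k => x (g k)) = fun k => (u k : ℝ) := hinj (hMx.trans hMuR.symm)
  intro j
  by_cases hj : j ∈ S
  · obtain ⟨k, hk⟩ := hg_surj j hj
    exact ⟨u k, by rw [← hk]; exact congrFun hxu k⟩
  · exact ⟨0, by rw [hxzero j hj]; simp⟩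
end

section
/- Ghouila-Houri-type sufficiency: if a matrix A with entries in {−1,0,1} has the property that every subset R of its rows can be partitioned into R₁ and R₂ such that for every column c, |∑_{r∈R₁} A_{rc} − ∑_{r∈R₂} A_{rc}| ≤ 1, then A is totally unimodular. -/
theorem stmt_9 {m n : ℕ} (A : Matrix (Fin m) (Fin n) ℤ)
    (hent : ∀ i j, A i j ∈ ({-1, 0, 1} : Set ℤ))
    (h : ∀ R : Finset (Fin m), ∃ R₁ R₂ : Finset (Fin m),
      R₁ ∪ R₂ = R ∧ Disjoint R₁ R₂ ∧
      ∀ c, |∑ r ∈ R₁, A r c - ∑ r ∈ R₂, A r c| ≤ 1) :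
    ∀ (t : ℕ) (f : Fin t → Fin m) (g : Fin t → Fin n),
      Function.Injective f → Function.Injective g →
      (A.submatrix f g).det ∈ ({-1, 0, 1} : Set ℤ) := by
  intro t
  induction t with
  | zero => intro f g _ _; simp [Matrix.det_fin_zero]
  | succ k ih =>
    intro f g hf hg
    set B := A.submatrix f g with hB
    suffices hle : |B.det| ≤ 1 by
      rcases abs_le.mp hle with ⟨h1, h2⟩
      simp only [Set.mem_insert_iff, Set.mem_singleton_iff]
      omega
    by_cases hdet : B.det = 0
    · simp [hdet]
    -- entries of row 0 of the adjugate are in {-1,0,1}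
    have hadj : ∀ i : Fin (k+1), |Matrix.adjugate B 0 i| ≤ 1 := by
      intro i
      rw [Matrix.adjugate_apply, Matrix.det_succ_row _ i]
      have hcollapse : ∀ j : Fin (k+1), j ≠ 0 →
          (-1:ℤ) ^ ((i : ℕ) + (j:ℕ)) * (B.updateRow i (Pi.single 0 1)) i j *
            (((B.updateRow i (Pi.single 0 1))).submatrix i.succAbove j.succAbove).det = 0 := by
        intro j hj
        rw [Matrix.updateRow_self, Pi.single_apply, if_neg hj]
        ring
      rw [Finset.sum_eq_single (0 : Fin (k+1)) (fun j _ hj => hcollapse j hj) (by simp)]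
      rw [Matrix.updateRow_self, Pi.single_eq_same]
      have hM : ((B.updateRow i (Pi.single 0 1)).submatrix i.succAbove
          (Fin.succAbove 0)) = A.submatrix (f ∘ i.succAbove) (g ∘ Fin.succAbove 0) := by
        ext a b
        simp [Matrix.submatrix_apply, Matrix.updateRow_ne (Fin.succAbove_ne i a), hB]
      rw [hM]
      have hd := ih (f ∘ i.succAbove) (g ∘ Fin.succAbove 0)
        (hf.comp (Fin.succAbove_right_injective))
        (hg.comp (Fin.succAbove_right_injective))
      simp only [Set.mem_insert_iff, Set.mem_singleton_iff] at hd
      rw [abs_mul, abs_mul, abs_pow, abs_neg, abs_one, one_pow, one_mul, one_mul]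
      rcases hd with hd | hd | hd <;> rw [hd] <;> norm_num
    -- row-sum identity from adjugate * B = det • 1
    have hrowsum : ∀ c : Fin (k+1),
        ∑ i, Matrix.adjugate B 0 i * B i c = if c = 0 then B.det else 0 := by
      intro c
      have := congrFun (congrFun (Matrix.adjugate_mul B) 0) c
      rw [Matrix.mul_apply] at this
      rw [this]
      by_cases hc : c = 0 <;> simp [Matrix.one_apply, hc, eq_comm]
    set R : Finset (Fin (k+1)) := Finset.univ.filter (fun i => Matrix.adjugate B 0 i ≠ 0)
      with hRdef
    have hRmem : ∀ i, i ∈ R ↔ Matrix.adjugate B 0 i ≠ 0 := by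
      intro i; simp [hRdef]
    have hRne : R.Nonempty := by
      by_contra hc
      rw [Finset.not_nonempty_iff_eq_empty] at hc
      have hall : ∀ i, Matrix.adjugate B 0 i = 0 := by
        intro i
        by_contra hi
        have : i ∈ R := (hRmem i).mpr hi
        simp [hc] at this
      have := hrowsum 0
      rw [if_pos rfl] at this
      apply hdet
      rw [← this]
      exact Finset.sum_eq_zero fun i _ => by rw [hall i, zero_mul]
    obtain ⟨R₁, R₂, hun, hdis, hbal⟩ := h (R.image f)
    set y : Fin (k+1) → ℤ := fun i => if f i ∈ R₁ then 1 else if f i ∈ R₂ then -1 else 0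
      with hy
    have hmemiff : ∀ i, f i ∈ R₁ ∪ R₂ ↔ i ∈ R := by
      intro i
      rw [hun]
      constructor
      · intro hi
        obtain ⟨i', hi', he⟩ := Finset.mem_image.mp hi
        rwa [← hf he]
      · intro hi; exact Finset.mem_image_of_mem f hi
    have hyR : ∀ i, i ∉ R → y i = 0 := by
      intro i hi
      have h1 : f i ∉ R₁ := fun hh => hi ((hmemiff i).mp (Finset.mem_union_left _ hh))
      have h2 : f i ∉ R₂ := fun hh => hi ((hmemiff i).mp (Finset.mem_union_right _ hh))
      simp [hy, h1, h2]
    have hy_pm : ∀ i ∈ R, y i = 1 ∨ y i = -1 := by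
      intro i hi
      rcases Finset.mem_union.mp ((hmemiff i).mpr hi) with h1 | h2
      · left; simp [hy, h1]
      · right
        have h1 : f i ∉ R₁ := fun hh => (Finset.disjoint_left.mp hdis hh) h2
        simp [hy, h1, h2]
    -- sums over R₁, R₂ as sums over preimages
    have himg : ∀ (T : Finset (Fin m)), T ⊆ R.image f → ∀ (c : Fin n),
        ∑ r ∈ T, A r c = ∑ i ∈ Finset.univ.filter (fun i => f i ∈ T), A (f i) c := by
      intro T hT c
      have hTe : T = (Finset.univ.filter (fun i => f i ∈ T)).image f := by
        ext r
        simp only [Finset.mem_image, Finset.mem_filter, Finset.mem_univ, true_and]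
        constructor
        · intro hr
          obtain ⟨i, _, rfl⟩ := Finset.mem_image.mp (hT hr)
          exact ⟨i, hr, rfl⟩
        · rintro ⟨i, hi, rfl⟩; exact hi
      conv_lhs => rw [hTe]
      rw [Finset.sum_image (fun a _ b _ hab => hf hab)]
    set S : Fin (k+1) → ℤ := fun c => ∑ i, y i * B i c with hS
    have hS_eq : ∀ c, S c = ∑ r ∈ R₁, A r (g c) - ∑ r ∈ R₂, A r (g c) := by
      intro c
      have hterm : ∀ i : Fin (k+1),
          y i * B i c = (if f i ∈ R₁ then B i c else 0) - (if f i ∈ R₂ then B i c else 0) := by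
        intro i
        by_cases h1 : f i ∈ R₁
        · have h2 : f i ∉ R₂ := fun hh => (Finset.disjoint_left.mp hdis h1) hh
          simp [hy, h1, h2]
        · by_cases h2 : f i ∈ R₂ <;> simp [hy, h1, h2]
      rw [hS]
      simp only [hterm]
      rw [Finset.sum_sub_distrib, ← Finset.sum_filter, ← Finset.sum_filter,
        himg R₁ (by rw [← hun]; exact Finset.subset_union_left) (g c),
        himg R₂ (by rw [← hun]; exact Finset.subset_union_right) (g c)]
      rfl
    have hS_le : ∀ c, |S c| ≤ 1 := fun c => by rw [hS_eq c]; exact hbal (g c)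
    -- parity: S c = 0 for c ≠ 0
    have heven : ∀ i, Even (y i - Matrix.adjugate B 0 i) := by
      intro i
      by_cases hi : i ∈ R
      · have h1 := hy_pm i hi
        have h2 := hadj i
        have h3 := (hRmem i).mp hi
        rcases abs_le.mp h2 with ⟨h4, h5⟩
        have : Matrix.adjugate B 0 i = 1 ∨ Matrix.adjugate B 0 i = -1 := by omega
        rcases h1 with h1 | h1 <;> rcases this with h6 | h6 <;> rw [h1, h6] <;> decide
      · have h1 := hyR i hi
        have h2 : Matrix.adjugate B 0 i = 0 := by
          by_contra hc; exact hi ((hRmem i).mpr hc)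
        rw [h1, h2]; decide
    have hSzero : ∀ c : Fin (k+1), c ≠ 0 → S c = 0 := by
      intro c hc
      have h0 : ∑ i, Matrix.adjugate B 0 i * B i c = 0 := by
        rw [hrowsum c, if_neg hc]
      have hEv : Even (S c) := by
        have : S c = ∑ i, (y i - Matrix.adjugate B 0 i) * B i c := by
          rw [hS]
          simp only [sub_mul]
          rw [Finset.sum_sub_distrib, h0, sub_zero]
        rw [this]
        exact Finset.even_sum _ fun i _ => (heven i).mul_right _
      obtain ⟨r, hr⟩ := hEv
      have := hS_le c
      rcases abs_le.mp this with ⟨h4, h5⟩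
      omega
    -- key identity: B.det * y j = S 0 * adjugate B 0 j
    have hkey : ∀ j, B.det * y j = S 0 * Matrix.adjugate B 0 j := by
      intro j
      have h1 : ∑ c, S c * Matrix.adjugate B c j = B.det * y j := by
        calc ∑ c, S c * Matrix.adjugate B c j
            = ∑ c, ∑ i, y i * B i c * Matrix.adjugate B c j := by
              apply Finset.sum_congr rfl; intro c _
              rw [hS, Finset.sum_mul]
          _ = ∑ i, ∑ c, y i * B i c * Matrix.adjugate B c j := Finset.sum_comm
          _ = ∑ i, y i * ∑ c, B i c * Matrix.adjugate B c j := by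
              apply Finset.sum_congr rfl; intro i _
              rw [Finset.mul_sum]; apply Finset.sum_congr rfl; intro c _; ring
          _ = ∑ i, y i * (B.det * (1 : Matrix (Fin (k+1)) (Fin (k+1)) ℤ) i j) := by
              apply Finset.sum_congr rfl; intro i _
              congr 1
              have := congrFun (congrFun (Matrix.mul_adjugate B) i) j
              rw [Matrix.mul_apply] at this
              rw [this]; simp
          _ = B.det * y j := by
              rw [Finset.sum_eq_single j (fun i _ hij => by
                simp [Matrix.one_apply, hij]) (by simp)]
              simp [Matrix.one_apply]; ring
      have h2 : ∑ c, S c * Matrix.adjugate B c j = S 0 * Matrix.adjugate B 0 j := by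
        rw [Finset.sum_eq_single (0 : Fin (k+1)) (fun c _ hc => by
          rw [hSzero c hc, zero_mul]) (by simp)]
      rw [← h1, h2]
    obtain ⟨j, hj⟩ := hRne
    have hyj : |y j| = 1 := by rcases hy_pm j hj with h1 | h1 <;> simp [h1]
    calc |B.det| = |B.det| * |y j| := by rw [hyj, mul_one]
      _ = |B.det * y j| := (abs_mul _ _).symm
      _ = |S 0 * Matrix.adjugate B 0 j| := by rw [hkey j]
      _ = |S 0| * |Matrix.adjugate B 0 j| := abs_mul _ _
      _ ≤ 1 * 1 := mul_le_mul (hS_le 0) (hadj j) (abs_nonneg _) zero_le_one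
      _ = 1 := mul_one 1
end

section
/- The constraint matrix of the fair top-k assignment LP is totally unimodular. Concretely: let the variables be x_{ij} for i ∈ {1,...,d} and j ∈ {1,...,k}, and let A be the 0/±1 matrix whose rows are (1) for each i the row of the constraint ∑_j x_{ij} ≤ 1, (2) for each j the row of ∑_i x_{ij} = 1, (3) for each group G_a of a partition of {1,...,d} the row of ∑_{i∈G_a} ∑_j x_{ij} ≥ ℓ_a, and (4) for each group G_a the row of ∑_{i∈G_a} ∑_j x_{ij} ≤ u_a. Then A is totally unimodular. -/
/-- The constraint matrix of the fair top-k assignment LP.  Rows: `Sum.inl i` for the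
constraints `∑_j x_{ij} ≤ 1`; `Sum.inr (Sum.inl j)` for `∑_i x_{ij} = 1`;
`Sum.inr (Sum.inr (Sum.inl a))` for the lower fairness constraint of group `a`
(written as `-∑_{i ∈ G_a} ∑_j x_{ij} ≤ -ℓ_a`); and `Sum.inr (Sum.inr (Sum.inr a))`
for the upper fairness constraint of group `a`.  The group partition is given by the
assignment `G : Fin d → Fin g`. -/
def fairMatrix (d k g : ℕ) (G : Fin d → Fin g) :
    Matrix (Fin d ⊕ Fin k ⊕ Fin g ⊕ Fin g) (Fin d × Fin k) ℤ :=
  fun r c =>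
    match r with
    | Sum.inl i => if c.1 = i then 1 else 0
    | Sum.inr (Sum.inl j) => if c.2 = j then 1 else 0
    | Sum.inr (Sum.inr (Sum.inl a)) => if G c.1 = a then -1 else 0
    | Sum.inr (Sum.inr (Sum.inr a)) => if G c.1 = a then 1 else 0

namespace FairTU

open Matrix

lemma sign_mul_mem {e x : ℤ} (he : e = 1 ∨ e = -1) (hx : x ∈ ({-1, 0, 1} : Set ℤ)) :
    e * x ∈ ({-1, 0, 1} : Set ℤ) := by
  simp only [Set.mem_insert_iff, Set.mem_singleton_iff] at hx ⊢
  rcases he with he | he <;> rcases hx with hx | hx | hx <;> simp [he, hx]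

lemma neg_one_pow_or (m : ℕ) : ((-1 : ℤ)) ^ m = 1 ∨ ((-1 : ℤ)) ^ m = -1 := by
  rcases Nat.even_or_odd m with hm | hm
  · exact Or.inl (Even.neg_one_pow hm)
  · exact Or.inr (Odd.neg_one_pow hm)

/-- Key lemma: a 0/1 square matrix whose rows are 2-colored such that each column has at
most one nonzero of each color has determinant in {-1,0,1}. -/
lemma detL : ∀ (t : ℕ) (M : Matrix (Fin t) (Fin t) ℤ) (p : Fin t → Bool),
    (∀ r c, M r c = 0 ∨ M r c = 1) →
    (∀ c r r', p r = p r' → M r c ≠ 0 → M r' c ≠ 0 → r = r') →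
    M.det ∈ ({-1, 0, 1} : Set ℤ) := by
  intro t
  induction t with
  | zero =>
    intro M p _ _
    simp [Matrix.det_fin_zero]
  | succ n ih =>
    intro M p hE hU
    by_cases hcol : ∀ c : Fin (n+1),
        ∃ rt rf, p rt = true ∧ p rf = false ∧ M rt c ≠ 0 ∧ M rf c ≠ 0
    · refine Or.inr (Or.inl ?_)
      rw [← Matrix.exists_vecMul_eq_zero_iff]
      refine ⟨fun r => if p r then 1 else -1, ?_, ?_⟩
      · intro h0
        have h1 := congrFun h0 0
        by_cases hp : p 0 = true <;> simp [hp] at h1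
      · funext c
        obtain ⟨rt, rf, hpt, hpf, hMt, hMf⟩ := hcol c
        have hrtf : rt ≠ rf := by
          intro h; rw [h, hpf] at hpt; cases hpt
        have hMt1 : M rt c = 1 := (hE rt c).resolve_left (by exact hMt)
        have hMf1 : M rf c = 1 := (hE rf c).resolve_left (by exact hMf)
        have hz : ∀ x : Fin (n+1), x ≠ rt ∧ x ≠ rf →
            (if p x then (1:ℤ) else -1) * M x c = 0 := by
          rintro x ⟨hxt, hxf⟩
          rcases hE x c with h0 | h1
          · simp [h0]
          · exfalso
            by_cases hpx : p x = true
            · exact hxt (hU c x rt (hpx.trans hpt.symm) (by simp [h1]) hMt)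
            · have hpx' : p x = false := by simpa using hpx
              exact hxf (hU c x rf (hpx'.trans hpf.symm) (by simp [h1]) hMf)
        have : ((fun r => if p r then (1:ℤ) else -1) ᵥ* M) c
            = ∑ x, (if p x then (1:ℤ) else -1) * M x c := by
          simp [Matrix.vecMul, dotProduct]
        rw [this, Fintype.sum_eq_add rt rf hrtf hz, hpt, hpf, hMt1, hMf1]
        simp
    · push_neg at hcol
      obtain ⟨c0, hc0⟩ := hcol
      have huniq : ∀ x y, M x c0 ≠ 0 → M y c0 ≠ 0 → x = y := by
        intro x y hx hy
        by_cases hpx : p x = true <;> by_cases hpy : p y = true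
        · exact hU c0 x y (by rw [hpx, hpy]) hx hy
        · exact absurd (hc0 x y hpx (by simpa using hpy) hx) hy
        · exact absurd (hc0 y x hpy (by simpa using hpx) hy) hx
        · have hpx' : p x = false := by simpa using hpx
          have hpy' : p y = false := by simpa using hpy
          exact hU c0 x y (by rw [hpx', hpy']) hx hy
      by_cases hzcol : ∀ x, M x c0 = 0
      · exact Or.inr (Or.inl (Matrix.det_eq_zero_of_column_eq_zero c0 hzcol))
      · push_neg at hzcol
        obtain ⟨r0, hr0⟩ := hzcol
        have h1 : M r0 c0 = 1 := (hE r0 c0).resolve_left hr0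
        rw [Matrix.det_succ_column M c0]
        rw [Fintype.sum_eq_single r0 (by
          intro x hx
          have : M x c0 = 0 := by
            by_contra hxc
            exact hx (huniq x r0 hxc hr0)
          simp [this])]
        rw [h1, mul_one]
        have hminor := ih (M.submatrix r0.succAbove c0.succAbove) (p ∘ r0.succAbove)
          (fun r c => hE _ _)
          (fun c x y hpxy hx hy =>
            Fin.succAbove_right_injective (hU _ _ _ hpxy hx hy))
        exact sign_mul_mem (neg_one_pow_or _) hminor

/-- Reduced matrix family: group rows carry a finite set of already-subtracted items. -/
def redMatrix (d k g : ℕ) (G : Fin d → Fin g) :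
    Matrix (Fin d ⊕ Fin k ⊕ (Fin g × Finset (Fin d))) (Fin d × Fin k) ℤ :=
  fun r c =>
    match r with
    | Sum.inl i => if c.1 = i then 1 else 0
    | Sum.inr (Sum.inl j) => if c.2 = j then 1 else 0
    | Sum.inr (Sum.inr p) => if G c.1 = p.1 ∧ c.1 ∉ p.2 then 1 else 0

def key (d k g : ℕ) : (Fin d ⊕ Fin k ⊕ (Fin g × Finset (Fin d))) → (Fin d ⊕ Fin k ⊕ Fin g)
  | Sum.inl i => Sum.inl i
  | Sum.inr (Sum.inl j) => Sum.inr (Sum.inl j)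
  | Sum.inr (Sum.inr p) => Sum.inr (Sum.inr p.1)

def badPair {d k g t : ℕ} (G : Fin d → Fin g)
    (f : Fin t → Fin d ⊕ Fin k ⊕ (Fin g × Finset (Fin d))) (x y : Fin t) : Prop :=
  ∃ a S i, f x = Sum.inr (Sum.inr (a, S)) ∧ f y = Sum.inl i ∧ G i = a ∧ i ∉ S

noncomputable def weight {d k g t : ℕ} (G : Fin d → Fin g)
    (f : Fin t → Fin d ⊕ Fin k ⊕ (Fin g × Finset (Fin d))) : ℕ :=
  {xy : Fin t × Fin t | badPair G f xy.1 xy.2}.ncard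

lemma red_nobad (d k g : ℕ) (G : Fin d → Fin g) (t : ℕ)
    (f : Fin t → Fin d ⊕ Fin k ⊕ (Fin g × Finset (Fin d))) (h : Fin t → Fin d × Fin k)
    (hkf : Function.Injective (key d k g ∘ f)) (hh : Function.Injective h)
    (hnb : ∀ x y, ¬ badPair G f x y) :
    ((redMatrix d k g G).submatrix f h).det ∈ ({-1, 0, 1} : Set ℤ) := by
  apply detL t _ (fun r =>
    (f r).elim (fun _ => false) (fun s => s.elim (fun _ => true) (fun _ => false)))
  · intro r c
    rcases hfr : f r with i | j | aS <;>
      · simp only [Matrix.submatrix_apply, redMatrix, hfr]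
        split_ifs <;> simp
  · intro c r r' hpp hx hy
    rcases hfr : f r with i | j | aS <;> rcases hfr' : f r' with i' | j' | aS' <;>
        simp only [Matrix.submatrix_apply, redMatrix, hfr, hfr',
          ite_ne_right_iff] at hx hy
    · -- inl / inl
      apply hkf
      simp only [Function.comp_apply, hfr, hfr', key]
      rw [← hx.1, ← hy.1]
    · simp [hfr, hfr'] at hpp
    · -- inl / group
      exact absurd ⟨aS'.1, aS'.2, i, hfr', hfr, by rw [← hx.1]; exact hy.1.1,
        by rw [← hx.1]; exact hy.1.2⟩ (hnb r' r)
    · simp [hfr, hfr'] at hpp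
    · -- j / j
      apply hkf
      simp only [Function.comp_apply, hfr, hfr', key]
      rw [← hx.1, ← hy.1]
    · simp [hfr, hfr'] at hpp
    · -- group / inl
      exact absurd ⟨aS.1, aS.2, i', hfr, hfr', by rw [← hy.1]; exact hx.1.1,
        by rw [← hy.1]; exact hx.1.2⟩ (hnb r r')
    · simp [hfr, hfr'] at hpp
    · -- group / group
      apply hkf
      simp only [Function.comp_apply, hfr, hfr', key]
      rw [← hx.1.1, ← hy.1.1]

lemma red_det (d k g : ℕ) (G : Fin d → Fin g) (t : ℕ) :
    ∀ (N : ℕ) (f : Fin t → Fin d ⊕ Fin k ⊕ (Fin g × Finset (Fin d)))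
      (h : Fin t → Fin d × Fin k),
      Function.Injective (key d k g ∘ f) → Function.Injective h →
      weight G f ≤ N →
      ((redMatrix d k g G).submatrix f h).det ∈ ({-1, 0, 1} : Set ℤ) := by
  intro N
  induction N with
  | zero =>
    intro f h hkf hh hw
    refine red_nobad d k g G t f h hkf hh ?_
    intro x y hb
    have hempty : {xy : Fin t × Fin t | badPair G f xy.1 xy.2} = ∅ :=
      (Set.ncard_eq_zero (Set.toFinite _)).mp (Nat.le_zero.mp hw)
    have hmem : (x, y) ∈ {xy : Fin t × Fin t | badPair G f xy.1 xy.2} := hb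
    rw [hempty] at hmem
    exact hmem
  | succ N ih =>
    intro f h hkf hh hw
    by_cases hbp : ∃ x y, badPair G f x y
    · obtain ⟨r, r', a, S, i, hfr, hfr', hGi, hiS⟩ := hbp
      have hrne : r ≠ r' := by
        intro e; rw [e, hfr'] at hfr; cases hfr
      set f₂ : Fin t → Fin d ⊕ Fin k ⊕ (Fin g × Finset (Fin d)) :=
        Function.update f r (Sum.inr (Sum.inr (a, insert i S))) with hf₂
      have hf₂r : f₂ r = Sum.inr (Sum.inr (a, insert i S)) := Function.update_self _ _ _
      have hf₂ne : ∀ x, x ≠ r → f₂ x = f x := fun x hx => Function.update_of_ne hx _ _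
      -- determinant equality via row operation
      have hMeq : (redMatrix d k g G).submatrix f h
          = ((redMatrix d k g G).submatrix f₂ h).updateRow r
              (((redMatrix d k g G).submatrix f₂ h) r + ((redMatrix d k g G).submatrix f₂ h) r') := by
        ext x c
        by_cases hx : x = r
        · subst hx
          rw [Matrix.updateRow_self]
          simp only [Pi.add_apply, Matrix.submatrix_apply, hf₂r, hf₂ne r' (Ne.symm hrne),
            hfr, hfr', redMatrix]
          by_cases h1 : (h c).1 = i
          · simp [h1, hGi, hiS, Finset.mem_insert]
          · by_cases h2 : G (h c).1 = a <;> by_cases h3 : (h c).1 ∈ S <;>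
              simp [h1, h2, h3, Finset.mem_insert]
        · rw [Matrix.updateRow_ne hx]
          simp [Matrix.submatrix_apply, hf₂ne x hx]
      have hdet : ((redMatrix d k g G).submatrix f h).det
          = ((redMatrix d k g G).submatrix f₂ h).det := by
        rw [hMeq]
        exact Matrix.det_updateRow_add_self _ hrne
      -- key composition unchanged
      have hkey : key d k g ∘ f₂ = key d k g ∘ f := by
        funext x
        by_cases hx : x = r
        · subst hx
          simp [hf₂r, hfr, key]
        · simp [hf₂ne x hx]
      -- weight strictly decreases
      have hsub : ∀ x y, badPair G f₂ x y → badPair G f x y := by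
        rintro x y ⟨a', S', i', hx, hy, hG', hS'⟩
        have hyr : y ≠ r := by
          intro e; rw [e, hf₂r] at hy; cases hy
        rw [hf₂ne y hyr] at hy
        by_cases hxr : x = r
        · subst hxr
          rw [hf₂r] at hx
          simp only [Sum.inr.injEq, Prod.mk.injEq] at hx
          obtain ⟨ha, hS⟩ := hx
          refine ⟨a, S, i', hfr, hy, hG'.trans ha.symm, ?_⟩
          intro hm
          rw [← hS] at hS'
          exact hS' (Finset.mem_insert_of_mem hm)
        · rw [hf₂ne x hxr] at hx
          exact ⟨a', S', i', hx, hy, hG', hS'⟩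
      have hbadf : badPair G f r r' := ⟨a, S, i, hfr, hfr', hGi, hiS⟩
      have hnotf₂ : ¬ badPair G f₂ r r' := by
        rintro ⟨a', S', i', hx, hy, hG', hS'⟩
        rw [hf₂r] at hx
        simp only [Sum.inr.injEq, Prod.mk.injEq] at hx
        rw [hf₂ne r' (Ne.symm hrne), hfr'] at hy
        simp only [Sum.inl.injEq] at hy
        rw [← hx.2, ← hy] at hS'
        exact hS' (Finset.mem_insert_self i S)
      have hwlt : weight G f₂ < weight G f := by
        unfold weight
        refine Set.ncard_lt_ncard ?_ (Set.toFinite _)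
        have hsub' : {xy : Fin t × Fin t | badPair G f₂ xy.1 xy.2}
            ⊆ {xy : Fin t × Fin t | badPair G f xy.1 xy.2} :=
          fun xy hxy => hsub xy.1 xy.2 hxy
        rw [Set.ssubset_iff_of_subset hsub']
        exact ⟨(r, r'), hbadf, fun hm => hnotf₂ hm⟩
      rw [hdet]
      exact ih f₂ h (hkey ▸ hkf) hh (by omega)
    · push_neg at hbp
      exact red_nobad d k g G t f h hkf hh hbp

lemma prod_sign {t : ℕ} (v : Fin t → ℤ) (hv : ∀ x, v x = 1 ∨ v x = -1) :
    (∏ x, v x) = 1 ∨ (∏ x, v x) = -1 := by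
  classical
  refine Finset.prod_induction v (fun z => z = 1 ∨ z = -1) ?_ (Or.inl rfl)
    (fun x _ => hv x)
  rintro x y (hx | hx) (hy | hy) <;> simp [hx, hy]

end FairTU

open FairTU Matrix in
theorem stmt_10 (d k g : ℕ) (G : Fin d → Fin g) :
    ∀ (t : ℕ) (f : Fin t → Fin d ⊕ Fin k ⊕ Fin g ⊕ Fin g) (h : Fin t → Fin d × Fin k),
      Function.Injective f → Function.Injective h →
      ((fairMatrix d k g G).submatrix f h).det ∈ ({-1, 0, 1} : Set ℤ) := by
  intro t f h hf hh
  by_cases hpair : ∃ r r' a, f r = Sum.inr (Sum.inr (Sum.inl a)) ∧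
      f r' = Sum.inr (Sum.inr (Sum.inr a))
  · -- a lower and upper row of the same group: determinant zero
    obtain ⟨r, r', a, hr, hr'⟩ := hpair
    refine Or.inr (Or.inl ?_)
    rw [← Matrix.exists_vecMul_eq_zero_iff]
    have hrr' : r ≠ r' := by
      intro e; rw [e, hr'] at hr; simp at hr
    refine ⟨fun x => if x = r then 1 else if x = r' then 1 else 0, ?_, ?_⟩
    · intro h0
      have := congrFun h0 r
      simp at this
    · funext c
      have hexp : ((fun x => if x = r then (1:ℤ) else if x = r' then 1 else 0) ᵥ*
          ((fairMatrix d k g G).submatrix f h)) c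
          = ∑ x, (if x = r then (1:ℤ) else if x = r' then 1 else 0) *
              ((fairMatrix d k g G).submatrix f h) x c := by
        simp [Matrix.vecMul, dotProduct]
      rw [hexp, Fintype.sum_eq_add r r' hrr' (by rintro x ⟨hx, hx'⟩; simp [hx, hx'])]
      simp only [if_pos rfl, if_neg (Ne.symm hrr'), one_mul, Matrix.submatrix_apply,
        hr, hr', fairMatrix]
      by_cases hg : G (h c).1 = a <;> simp [hg]
  · -- otherwise reduce to the sign-free reduced matrix
    push_neg at hpair
    set φ : (Fin d ⊕ Fin k ⊕ Fin g ⊕ Fin g) → (Fin d ⊕ Fin k ⊕ (Fin g × Finset (Fin d))) :=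
      fun r => match r with
        | Sum.inl i => Sum.inl i
        | Sum.inr (Sum.inl j) => Sum.inr (Sum.inl j)
        | Sum.inr (Sum.inr (Sum.inl a)) => Sum.inr (Sum.inr (a, (∅ : Finset (Fin d))))
        | Sum.inr (Sum.inr (Sum.inr a)) => Sum.inr (Sum.inr (a, (∅ : Finset (Fin d))))
      with hφ
    set ε : (Fin d ⊕ Fin k ⊕ Fin g ⊕ Fin g) → ℤ :=
      fun r => match r with
        | Sum.inr (Sum.inr (Sum.inl _)) => -1
        | _ => 1
      with hε
    have hMeq : (fairMatrix d k g G).submatrix f h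
        = Matrix.of (fun x c => ε (f x) *
            ((redMatrix d k g G).submatrix (φ ∘ f) h) x c) := by
      ext x c
      rcases hfx : f x with i | j | a | a <;>
        simp [fairMatrix, redMatrix, hφ, hε, hfx, Matrix.submatrix_apply] <;>
        by_cases hg : G (h c).1 = a <;> simp [hg]
    have hkinj : Function.Injective (key d k g ∘ (φ ∘ f)) := by
      intro x y hxy
      rcases hfx : f x with i | j | a | a <;> rcases hfy : f y with i' | j' | a' | a' <;>
          simp only [Function.comp_apply, hfx, hfy, hφ, key, Sum.inl.injEq,
            Sum.inr.injEq, Prod.mk.injEq, and_true, reduceCtorEq] at hxy <;>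
        (subst hxy
         first
          | exact hf (hfx.trans hfy.symm)
          | exact absurd hfy (hpair x y _ hfx)
          | exact absurd hfx (hpair y x _ hfy))
    have hred := red_det d k g G t (weight G (φ ∘ f)) (φ ∘ f) h hkinj hh le_rfl
    rw [hMeq, Matrix.det_mul_column (fun x => ε (f x))]
    refine sign_mul_mem ?_ hred
    apply prod_sign
    intro x
    rcases f x with i | j | a | a <;> simp [hε]
end

section
/- For every subset R of the rows of the fair top-k assignment constraint matrix A, there exists a partition of R into R₁ and R₂ such that for every column c, |∑_{r∈R₁} A_{rc} − ∑_{r∈R₂} A_{rc}| ≤ 1. -/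
theorem stmt_11 (d k g : ℕ) (G : Fin d → Fin g)
    (R : Finset (Fin d ⊕ Fin k ⊕ Fin g ⊕ Fin g)) :
    ∃ R₁ R₂ : Finset (Fin d ⊕ Fin k ⊕ Fin g ⊕ Fin g),
      R₁ ∪ R₂ = R ∧ Disjoint R₁ R₂ ∧
      ∀ c : Fin d × Fin k,
        |∑ r ∈ R₁, fairMatrix d k g G r c - ∑ r ∈ R₂, fairMatrix d k g G r c| ≤ 1 := by
  classical
  set p : (Fin d ⊕ Fin k ⊕ Fin g ⊕ Fin g) → Prop := fun r =>
    match r with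
    | Sum.inl i => (Sum.inr (Sum.inr (Sum.inl (G i))) ∈ R ↔
        Sum.inr (Sum.inr (Sum.inr (G i))) ∈ R)
    | Sum.inr (Sum.inl _) => False
    | Sum.inr (Sum.inr (Sum.inl a)) => Sum.inr (Sum.inr (Sum.inr a)) ∈ R
    | Sum.inr (Sum.inr (Sum.inr _)) => True
  refine ⟨R.filter p, R.filter fun r => ¬ p r,
    Finset.filter_union_filter_not_eq p R, Finset.disjoint_filter_filter_not R R p, ?_⟩
  intro c
  have key : ∀ S : Finset (Fin d ⊕ Fin k ⊕ Fin g ⊕ Fin g),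
      ∑ r ∈ S, fairMatrix d k g G r c =
      (if Sum.inl c.1 ∈ S then (1:ℤ) else 0)
      + (if Sum.inr (Sum.inl c.2) ∈ S then 1 else 0)
      + (if Sum.inr (Sum.inr (Sum.inl (G c.1))) ∈ S then -1 else 0)
      + (if Sum.inr (Sum.inr (Sum.inr (G c.1))) ∈ S then 1 else 0) := by
    intro S
    have hf : ∀ r, fairMatrix d k g G r c =
        (if r = Sum.inl c.1 then (1:ℤ) else 0)
        + (if r = Sum.inr (Sum.inl c.2) then 1 else 0)
        + (if r = Sum.inr (Sum.inr (Sum.inl (G c.1))) then -1 else 0)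
        + (if r = Sum.inr (Sum.inr (Sum.inr (G c.1))) then 1 else 0) := by
      rintro (i | j | a | a) <;> simp only [fairMatrix] <;>
        split_ifs with h1 h2 h3 h4 <;> simp_all
    simp only [hf]
    rw [Finset.sum_add_distrib, Finset.sum_add_distrib, Finset.sum_add_distrib]
    simp [Finset.sum_ite_eq']
  rw [key, key]
  simp only [Finset.mem_filter, p]
  by_cases h1 : Sum.inl c.1 ∈ R <;> by_cases h2 : Sum.inr (Sum.inl c.2) ∈ R <;>
    by_cases h3 : Sum.inr (Sum.inr (Sum.inl (G c.1))) ∈ R <;>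
    by_cases h4 : Sum.inr (Sum.inr (Sum.inr (G c.1))) ∈ R <;>
      simp [h1, h2, h3, h4]
end
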